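/- With û₀ Schwartz (rapid decay of û₀, ∂û₀/∂k, ∂û₀/∂l) and ṽ(k,ω) = (i|ω|/2π)𝟙_{|ω|≥|k|}û₀(k,√(ω²−k²)), there is a constant C such that ∫_{−∞}^{∞} |ṽ(k,ω) − ṽ(k',ω)| dω ≤ C|k−k'|/(1+k²) whenever k·k' ≥ 0 and |k| ≤ |k'| ≤ |k| + 1. -/

import Mathlib

open MeasureTheory

noncomputable def vtil (u₀ : ℝ × ℝ → ℂ) (k ω : ℝ) : ℂ :=
  (Complex.I * |ω| / (2 * Real.pi)) *
    (if |k| ≤ |ω| then u₀ (k, Real.sqrt (ω ^ 2 - k ^ 2)) else 0)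

open Set Filter Real

/-! ### Auxiliary lemmas -/

lemma aux_sq_le_mul {k k' : ℝ} (hsign : 0 ≤ k * k') (hle : |k| ≤ |k'|) : k^2 ≤ k*k' := by
  have h1 : |k| * |k'| = k * k' := by rw [← abs_mul, abs_of_nonneg hsign]
  nlinarith [abs_nonneg k, sq_abs k]

lemma aux_abs_sub {k k' : ℝ} (hsign : 0 ≤ k * k') (hle : |k| ≤ |k'|) :
    |k'| - |k| = |k - k'| := by
  have h1 : |k| * |k'| = k * k' := by rw [← abs_mul, abs_of_nonneg hsign]
  have h2 : (|k'| - |k|)^2 = (k - k')^2 := by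
    have := sq_abs k; have := sq_abs k'; nlinarith
  have h3 : 0 ≤ |k'| - |k| := by linarith
  calc |k'| - |k| = Real.sqrt ((|k'| - |k|)^2) := (Real.sqrt_sq h3).symm
    _ = Real.sqrt ((k-k')^2) := by rw [h2]
    _ = |k - k'| := Real.sqrt_sq_eq_abs _

lemma aux_seg_sq {k k' t : ℝ} (hsign : 0 ≤ k * k') (hle : |k| ≤ |k'|)
    (ht0 : 0 ≤ t) : k^2 ≤ (k + t*(k'-k))^2 := by
  have h := aux_sq_le_mul hsign hle
  nlinarith [mul_nonneg ht0 (sub_nonneg.mpr h), sq_nonneg (t*(k'-k))]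

/-- The integrand appearing in the singular part of the estimate. -/
noncomputable def ff (k : ℝ) (x : ℝ) : ℝ := |x| / (Real.sqrt (x^2 - k^2) * (1 + (x^2 - k^2)))

lemma ff_nonneg (k x : ℝ) : 0 ≤ ff k x := by
  rcases le_or_gt (x^2 - k^2) 0 with h | h
  · rw [ff, Real.sqrt_eq_zero'.mpr h, zero_mul, div_zero]
  · have h2 : 0 < Real.sqrt (x^2-k^2) := Real.sqrt_pos.mpr h
    rw [ff]; positivity

lemma ff_neg_eq (k x : ℝ) : ff k (-x) = ff k x := by
  have h : (-x)^2 = x^2 := by ring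
  rw [ff, ff, h, abs_neg]

lemma hasDerivAt_FF (k x : ℝ) (hx : 0 < x^2 - k^2) (hx0 : 0 ≤ x) :
    HasDerivAt (fun ω => Real.arctan (Real.sqrt (ω^2 - k^2))) (ff k x) x := by
  have hs : HasDerivAt (fun ω : ℝ => ω^2 - k^2) (2*x) x := by
    simpa using (hasDerivAt_pow 2 x).sub_const (k^2)
  have hsq := (Real.hasDerivAt_sqrt (ne_of_gt hx)).comp x hs
  have harc := (Real.hasDerivAt_arctan (Real.sqrt (x^2 - k^2))).comp x hsq
  refine harc.congr_deriv ?_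
  have h1 : Real.sqrt (x^2-k^2) ^ 2 = x^2 - k^2 := Real.sq_sqrt hx.le
  have h2 : 0 < Real.sqrt (x^2-k^2) := Real.sqrt_pos.mpr hx
  rw [ff, abs_of_nonneg hx0, h1]
  field_simp

lemma tendsto_sqrt_atTop' : Tendsto Real.sqrt atTop atTop := by
  apply tendsto_atTop_atTop_of_monotone (fun a b h => Real.sqrt_le_sqrt h)
  intro b
  exact ⟨b^2, by rw [Real.sqrt_sq_eq_abs]; exact le_abs_self b⟩

lemma tendsto_FF (k : ℝ) :
    Tendsto (fun ω => Real.arctan (Real.sqrt (ω^2 - k^2))) atTop (nhds (π/2)) := by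
  have h1 : Tendsto (fun ω : ℝ => ω^2 - k^2) atTop atTop := by
    apply tendsto_atTop_add_const_right
    exact tendsto_pow_atTop (two_ne_zero)
  have h2 := tendsto_sqrt_atTop'.comp h1
  exact (Real.tendsto_arctan_atTop.mono_right nhdsWithin_le_nhds).comp h2

lemma integrableOn_ff {k b : ℝ} (hb : |k| < b) : IntegrableOn (ff k) (Ici b) := by
  rw [integrableOn_Ici_iff_integrableOn_Ioi]
  apply integrableOn_Ioi_deriv_of_nonneg' (g := fun ω => Real.arctan (Real.sqrt (ω^2 - k^2)))
    (l := π/2)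
  · intro x hx
    have hx0 : 0 ≤ x := le_trans (abs_nonneg k) (le_trans hb.le hx)
    have : |k| < x := lt_of_lt_of_le hb hx
    exact hasDerivAt_FF k x (by nlinarith [sq_abs k, abs_nonneg k]) hx0
  · intro x _; exact ff_nonneg k x
  · exact tendsto_FF k

lemma integral_ff_le {k b : ℝ} (hb : |k| < b) : ∫ x in Ici b, ff k x ≤ π/2 := by
  rw [integral_Ici_eq_integral_Ioi]
  rw [integral_Ioi_of_hasDerivAt_of_nonneg' (g := fun ω => Real.arctan (Real.sqrt (ω^2 - k^2)))
    (l := π/2) ?_ (fun x _ => ff_nonneg k x) (tendsto_FF k)]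
  · have : (0:ℝ) ≤ Real.arctan (Real.sqrt (b^2 - k^2)) := by
      rw [← Real.arctan_zero]
      exact Real.arctan_strictMono.monotone (Real.sqrt_nonneg _)
    linarith
  · intro x hx
    have hx0 : 0 ≤ x := le_trans (abs_nonneg k) (le_trans hb.le hx)
    have : |k| < x := lt_of_lt_of_le hb hx
    exact hasDerivAt_FF k x (by nlinarith [sq_abs k, abs_nonneg k]) hx0

lemma schwartz_bound (u₀ : SchwartzMap (ℝ × ℝ) ℂ) :
    ∃ M : ℝ, 0 < M ∧ (∀ x : ℝ × ℝ, ‖u₀ x‖ * (1 + x.1^2 + x.2^2)^3 ≤ M) ∧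
      (∀ x : ℝ × ℝ, ‖fderiv ℝ (fun p => u₀ p) x‖ * (1 + x.1^2 + x.2^2)^3 ≤ M) := by
  obtain ⟨C₀, hC₀p, hC₀⟩ := u₀.decay 0 0
  obtain ⟨C₆, hC₆p, hC₆⟩ := u₀.decay 6 0
  obtain ⟨D₀, hD₀p, hD₀⟩ := (SchwartzMap.fderivCLM ℝ (ℝ × ℝ) ℂ u₀).decay 0 0
  obtain ⟨D₆, hD₆p, hD₆⟩ := (SchwartzMap.fderivCLM ℝ (ℝ × ℝ) ℂ u₀).decay 6 0
  refine ⟨32*(C₀+C₆+D₀+D₆), by positivity, fun x => ?_, fun x => ?_⟩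
  · have h0 := hC₀ x; have h6 := hC₆ x
    rw [norm_iteratedFDeriv_zero] at h0 h6
    simp only [pow_zero, one_mul] at h0
    have hx1 : |x.1| ≤ ‖x‖ := norm_fst_le x
    have hx2 : |x.2| ≤ ‖x‖ := norm_snd_le x
    have hn : 0 ≤ ‖x‖ := norm_nonneg x
    have hkey : (1 + x.1^2 + x.2^2)^3 ≤ 32*(1 + ‖x‖^6) := by
      have e1 : x.1^2 ≤ ‖x‖^2 := by nlinarith [sq_abs x.1, pow_le_pow_left₀ (abs_nonneg x.1) hx1 2]
      have e2 : x.2^2 ≤ ‖x‖^2 := by nlinarith [sq_abs x.2, pow_le_pow_left₀ (abs_nonneg x.2) hx2 2]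
      have e3 : (1 + x.1^2 + x.2^2)^3 ≤ (1 + 2*‖x‖^2)^3 := by
        apply pow_le_pow_left₀ (by positivity) (by linarith)
      have e4 : (1 + 2*‖x‖^2)^3 ≤ 32*(1 + (‖x‖^2)^3) := by
        nlinarith [sq_nonneg (‖x‖^2 - 1), sq_nonneg ‖x‖, sq_nonneg (‖x‖^2-‖x‖),
          sq_nonneg (‖x‖^2*(‖x‖^2-1)), mul_nonneg (mul_nonneg hn hn) (sq_nonneg (‖x‖^2-1))]
      calc (1 + x.1^2 + x.2^2)^3 ≤ (1 + 2*‖x‖^2)^3 := e3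
        _ ≤ 32*(1 + (‖x‖^2)^3) := e4
        _ = 32*(1 + ‖x‖^6) := by ring
    nlinarith [norm_nonneg (u₀ x), mul_le_mul_of_nonneg_left hkey (norm_nonneg (u₀ x))]
  · have h0 := hD₀ x; have h6 := hD₆ x
    rw [norm_iteratedFDeriv_zero, SchwartzMap.fderivCLM_apply] at h0 h6
    simp only [pow_zero, one_mul] at h0
    have hx1 : |x.1| ≤ ‖x‖ := norm_fst_le x
    have hx2 : |x.2| ≤ ‖x‖ := norm_snd_le x
    have hn : 0 ≤ ‖x‖ := norm_nonneg x
    have hkey : (1 + x.1^2 + x.2^2)^3 ≤ 32*(1 + ‖x‖^6) := by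
      have e1 : x.1^2 ≤ ‖x‖^2 := by nlinarith [sq_abs x.1, pow_le_pow_left₀ (abs_nonneg x.1) hx1 2]
      have e2 : x.2^2 ≤ ‖x‖^2 := by nlinarith [sq_abs x.2, pow_le_pow_left₀ (abs_nonneg x.2) hx2 2]
      have e3 : (1 + x.1^2 + x.2^2)^3 ≤ (1 + 2*‖x‖^2)^3 := by
        apply pow_le_pow_left₀ (by positivity) (by linarith)
      have e4 : (1 + 2*‖x‖^2)^3 ≤ 32*(1 + (‖x‖^2)^3) := by
        nlinarith [sq_nonneg (‖x‖^2 - 1), sq_nonneg ‖x‖, sq_nonneg (‖x‖^2-‖x‖),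
          sq_nonneg (‖x‖^2*(‖x‖^2-1)), mul_nonneg (mul_nonneg hn hn) (sq_nonneg (‖x‖^2-1))]
      calc (1 + x.1^2 + x.2^2)^3 ≤ (1 + 2*‖x‖^2)^3 := e3
        _ ≤ 32*(1 + (‖x‖^2)^3) := e4
        _ = 32*(1 + ‖x‖^6) := by ring
    nlinarith [norm_nonneg (fderiv ℝ (fun p => u₀ p) x),
      mul_le_mul_of_nonneg_left hkey (norm_nonneg (fderiv ℝ (fun p => u₀ p) x))]

lemma mvt_bound (u₀ : SchwartzMap (ℝ × ℝ) ℂ) {M : ℝ}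
    (hM : ∀ x : ℝ × ℝ, ‖fderiv ℝ (fun p => u₀ p) x‖ * (1 + x.1^2 + x.2^2)^3 ≤ M)
    {x y : ℝ × ℝ} {R : ℝ} (hR : 0 < R)
    (hseg : ∀ p ∈ segment ℝ x y, R ≤ 1 + p.1^2 + p.2^2) :
    ‖u₀ y - u₀ x‖ ≤ M / R^3 * ‖y - x‖ := by
  apply Convex.norm_image_sub_le_of_norm_fderiv_le
    (fun p _ => u₀.differentiableAt) ?_ (convex_segment x y)
    (left_mem_segment ℝ x y) (right_mem_segment ℝ x y)
  intro p hp
  have h1 := hM p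
  have h2 := hseg p hp
  rw [le_div_iff₀ (by positivity)]
  calc ‖fderiv ℝ (fun p => u₀ p) p‖ * R^3
      ≤ ‖fderiv ℝ (fun p => u₀ p) p‖ * (1 + p.1^2 + p.2^2)^3 := by
        apply mul_le_mul_of_nonneg_left _ (norm_nonneg _)
        exact pow_le_pow_left₀ hR.le h2 3
    _ ≤ M := h1

lemma norm_pref (ω : ℝ) : ‖(Complex.I * |ω| / (2 * Real.pi) : ℂ)‖ ≤ |ω| := by
  rw [norm_div, norm_mul, Complex.norm_I, one_mul]
  have h1 : ‖((|ω| : ℝ) : ℂ)‖ = |ω| := by simp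
  rw [h1]
  apply div_le_self (abs_nonneg ω)
  have h2 : ‖(2 * (Real.pi : ℝ) : ℂ)‖ = 2 * Real.pi := by
    simp [abs_of_nonneg Real.pi_pos.le]
  calc (1:ℝ) ≤ 2 * Real.pi := by nlinarith [Real.pi_gt_three]
    _ = ‖(2 * (Real.pi : ℝ) : ℂ)‖ := h2.symm
    _ = _ := by norm_cast

set_option maxHeartbeats 2000000 in
theorem vtil_lipschitz_bound (u₀ : SchwartzMap (ℝ × ℝ) ℂ) :
    ∃ C : ℝ, ∀ k k' : ℝ, 0 ≤ k * k' → |k| ≤ |k'| → |k'| ≤ |k| + 1 →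
      ∫ ω : ℝ, ‖vtil (fun p => u₀ p) k ω - vtil (fun p => u₀ p) k' ω‖
        ≤ C * |k - k'| / (1 + k ^ 2) := by
  obtain ⟨M, hM, hMv, hMd⟩ := schwartz_bound u₀
  refine ⟨20 * M, ?_⟩
  intro k k' hsign hle hle1
  by_cases hkk : k = k'
  · subst hkk
    simp only [sub_self, norm_zero, integral_zero, abs_zero, mul_zero, zero_div]
    exact le_rfl
  -- nontrivial case
  have hd0 : 0 < |k - k'| := abs_pos.mpr (sub_ne_zero.mpr hkk)
  have hba : |k'| - |k| = |k - k'| := aux_abs_sub hsign hle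
  have hlt : |k| < |k'| := by linarith
  have hb0 : (0:ℝ) < |k'| := (abs_nonneg k).trans_lt hlt
  have hk2 : k^2 < k'^2 := by nlinarith [sq_abs k, sq_abs k', abs_nonneg k]
  have hkposd : (0:ℝ) < 1 + k^2 := by positivity
  have hdelta : k'^2 - k^2 ≤ 2*(1+k^2)* |k-k'| := by
    have e : k'^2 - k^2 = (|k'|+|k|)*(|k'|-|k|) := by rw [← sq_abs k, ← sq_abs k']; ring
    rw [hba] at e
    nlinarith [sq_nonneg (|k|-1), abs_nonneg k, hd0, sq_abs k]
  set S : Set ℝ := {x : ℝ | |k| ≤ |x| ∧ |x| < |k'|} with hSdef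
  have hSm : MeasurableSet S :=
    (measurableSet_le measurable_const measurable_abs).inter
      (measurableSet_lt measurable_abs measurable_const)
  set t1 : ℝ → ℝ := S.indicator (fun _ => M* |k'|/(1+k^2)^3) with ht1def
  set t2 : ℝ → ℝ := fun ω => M* |k-k'|/(1+k^2) * (1+ω^2)⁻¹ with ht2def
  set c3 : ℝ := M*(k'^2-k^2)/(1+k^2)^2 with hc3def
  have hc3n : 0 ≤ c3 := by
    rw [hc3def]; apply div_nonneg _ (by positivity)
    apply mul_nonneg hM.le (by linarith)
  set t3 : ℝ → ℝ :=
    fun ω => c3 * ((Ici |k'|).indicator (ff k) ω + (Ici |k'|).indicator (ff k) (-ω)) with ht3def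
  have ht1n : ∀ ω, 0 ≤ t1 ω :=
    fun ω => Set.indicator_nonneg (fun _ _ => by positivity) ω
  have ht2n : ∀ ω, 0 ≤ t2 ω := fun ω => by
    rw [ht2def]
    exact mul_nonneg (div_nonneg (mul_nonneg hM.le (abs_nonneg _)) (by positivity))
      (by positivity)
  have ht3n : ∀ ω, 0 ≤ t3 ω := fun ω =>
    mul_nonneg hc3n (add_nonneg
      (Set.indicator_nonneg (fun x _ => ff_nonneg k x) ω)
      (Set.indicator_nonneg (fun x _ => ff_nonneg k x) (-ω)))
  -- the pointwise bound
  have key : ∀ ω : ℝ, ‖vtil (fun p => u₀ p) k ω - vtil (fun p => u₀ p) k' ω‖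
      ≤ t1 ω + t2 ω + t3 ω := by
    intro ω
    simp only [vtil]
    rcases lt_or_ge |ω| |k| with hA | hA
    · rw [if_neg (by linarith), if_neg (by linarith)]
      simp only [mul_zero, sub_self, norm_zero]
      linarith [ht1n ω, ht2n ω, ht3n ω]
    have hω2 : k^2 ≤ ω^2 := by nlinarith [sq_abs k, sq_abs ω, abs_nonneg k, abs_nonneg ω]
    have hLsq : (Real.sqrt (ω^2-k^2))^2 = ω^2 - k^2 := Real.sq_sqrt (by linarith)
    have hval : ‖u₀ (k, Real.sqrt (ω^2-k^2))‖ ≤ M / (1+ω^2)^3 := by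
      have h := hMv (k, Real.sqrt (ω^2-k^2))
      simp only at h
      rw [le_div_iff₀ (by positivity)]
      have e : (1+ω^2) = 1 + k^2 + (Real.sqrt (ω^2-k^2))^2 := by rw [hLsq]; ring
      rw [e]; exact h
    rcases lt_or_ge |ω| |k'| with hB | hC
    · -- annulus region
      rw [if_pos hA, if_neg (not_le.mpr hB), mul_zero, sub_zero]
      have hmem : ω ∈ S := ⟨hA, hB⟩
      have hsplit : t1 ω = M* |k'|/(1+k^2)^3 := by
        rw [ht1def]; exact Set.indicator_of_mem hmem _
      have step : ‖Complex.I * (|ω|:ℝ) / (2 * Real.pi) *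
          u₀ (k, Real.sqrt (ω^2-k^2))‖ ≤ M* |k'|/(1+k^2)^3 := by
        rw [norm_mul]
        calc ‖(Complex.I * (|ω|:ℝ) / (2 * Real.pi) : ℂ)‖ * ‖u₀ (k, Real.sqrt (ω^2-k^2))‖
            ≤ |ω| * (M / (1+ω^2)^3) :=
              mul_le_mul (norm_pref ω) hval (norm_nonneg _) (abs_nonneg _)
          _ ≤ |k'| * (M / (1+k^2)^3) := by
              apply mul_le_mul hB.le _ (by positivity) (abs_nonneg _)
              rw [div_le_div_iff₀ (by positivity) (by positivity)]
              have hp : (1+k^2)^3 ≤ (1+ω^2)^3 := pow_le_pow_left₀ (by positivity) (by linarith) 3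
              nlinarith [mul_le_mul_of_nonneg_left hp hM.le]
          _ = M* |k'|/(1+k^2)^3 := by ring
      have goal2 : ‖Complex.I * (|ω|:ℝ) / (2 * Real.pi) *
          u₀ (k, Real.sqrt (ω^2-k^2))‖ ≤ t1 ω := by rw [hsplit]; exact step
      linarith [ht2n ω, ht3n ω]
    · -- far region
      rw [if_pos hA, if_pos hC, ← mul_sub, norm_mul]
      have hω2' : k'^2 ≤ ω^2 := by nlinarith [sq_abs k', sq_abs ω, abs_nonneg k', abs_nonneg ω]
      set L : ℝ := Real.sqrt (ω^2-k^2) with hLdef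
      set L' : ℝ := Real.sqrt (ω^2-k'^2) with hL'def
      have hL'sq : L'^2 = ω^2 - k'^2 := Real.sq_sqrt (by linarith)
      have hLpos : 0 < L := Real.sqrt_pos.mpr (by nlinarith)
      have hL'0 : 0 ≤ L' := Real.sqrt_nonneg _
      have hL'L : L' ≤ L := Real.sqrt_le_sqrt (by linarith)
      have hwpos : (0:ℝ) < 1 + ω^2 := by positivity
      -- T1 : variation in the first coordinate
      have hT1 : ‖u₀ (k', L) - u₀ (k, L)‖ ≤ M/(1+ω^2)^3 * |k - k'| := by
        have hseg : ∀ p ∈ segment ℝ ((k, L) : ℝ × ℝ) ((k', L) : ℝ × ℝ),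
            1 + ω^2 ≤ 1 + p.1^2 + p.2^2 := by
          intro p hp
          rw [segment_eq_image'] at hp
          obtain ⟨t, ⟨ht0, ht1⟩, rfl⟩ := hp
          have hc1 : ((k, L) + t • ((k', L) - ((k, L):ℝ×ℝ))).1 = k + t*(k'-k) := by
            simp [Prod.sub_def, smul_eq_mul]
          have hc2 : ((k, L) + t • ((k', L) - ((k, L):ℝ×ℝ))).2 = L := by
            simp [Prod.sub_def, smul_eq_mul]
          rw [hc1, hc2]
          have := aux_seg_sq hsign hle ht0 (k := k) (k' := k')
          nlinarith [hLsq]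
        have h := mvt_bound u₀ hMd hwpos hseg
        have hnorm : ‖((k', L) : ℝ×ℝ) - (k, L)‖ = |k - k'| := by
          rw [Prod.norm_def]
          simp [Prod.sub_def, abs_sub_comm k k']
        rw [hnorm] at h
        exact h
      -- T2 : variation in the second coordinate
      have hT2 : ‖u₀ (k', L') - u₀ (k', L)‖ ≤ M/(1+ω^2)^3 * (L - L') := by
        have hseg : ∀ p ∈ segment ℝ ((k', L) : ℝ × ℝ) ((k', L') : ℝ × ℝ),
            1 + ω^2 ≤ 1 + p.1^2 + p.2^2 := by
          intro p hp
          rw [segment_eq_image'] at hp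
          obtain ⟨t, ⟨ht0, ht1⟩, rfl⟩ := hp
          have hc1 : (((k', L) : ℝ×ℝ) + t • (((k', L'):ℝ×ℝ) - (k', L))).1 = k' := by
            simp [Prod.sub_def, smul_eq_mul]
          have hc2 : (((k', L) : ℝ×ℝ) + t • (((k', L'):ℝ×ℝ) - (k', L))).2 = L + t*(L'-L) := by
            simp [Prod.sub_def, smul_eq_mul]
          rw [hc1, hc2]
          have h1 : L' ≤ L + t*(L'-L) := by nlinarith
          have h2 : 0 ≤ L + t*(L'-L) := le_trans hL'0 h1
          have h3 : L'^2 ≤ (L + t*(L'-L))^2 := by nlinarith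
          nlinarith [hL'sq]
        have h := mvt_bound u₀ hMd hwpos hseg
        have hnorm : ‖((k', L') : ℝ×ℝ) - (k', L)‖ = L - L' := by
          rw [Prod.norm_def]
          simp [Prod.sub_def, abs_of_nonpos (by linarith : L' - L ≤ 0)]
          linarith
        rw [hnorm] at h
        exact h
      have htri : ‖u₀ (k, L) - u₀ (k', L')‖
          ≤ M/(1+ω^2)^3 * |k - k'| + M/(1+ω^2)^3 * (L - L') := by
        have e : u₀ (k, L) - u₀ (k', L')
            = -(u₀ (k', L) - u₀ (k, L)) + -(u₀ (k', L') - u₀ (k', L)) := by ring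
        rw [e]
        calc ‖-(u₀ (k', L) - u₀ (k, L)) + -(u₀ (k', L') - u₀ (k', L))‖
            ≤ ‖-(u₀ (k', L) - u₀ (k, L))‖ + ‖-(u₀ (k', L') - u₀ (k', L))‖ := norm_add_le _ _
          _ = ‖u₀ (k', L) - u₀ (k, L)‖ + ‖u₀ (k', L') - u₀ (k', L)‖ := by rw [norm_neg, norm_neg]
          _ ≤ _ := add_le_add hT1 hT2
      have hLL' : L - L' ≤ (k'^2 - k^2)/L := by
        rw [le_div_iff₀ hLpos]
        nlinarith [mul_nonneg hL'0 (sub_nonneg.mpr hL'L)]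
      have hfull : ‖(Complex.I * (|ω|:ℝ) / (2 * Real.pi) : ℂ)‖ * ‖u₀ (k, L) - u₀ (k', L')‖
          ≤ |ω| * (M/(1+ω^2)^3 * |k - k'|) + |ω| * (M/(1+ω^2)^3 * ((k'^2-k^2)/L)) := by
        have h1 : ‖u₀ (k, L) - u₀ (k', L')‖
            ≤ M/(1+ω^2)^3 * |k - k'| + M/(1+ω^2)^3 * ((k'^2-k^2)/L) := by
          refine htri.trans (add_le_add_right ?_ _)
          exact mul_le_mul_of_nonneg_left hLL' (by positivity)
        calc ‖(Complex.I * (|ω|:ℝ) / (2 * Real.pi) : ℂ)‖ * ‖u₀ (k, L) - u₀ (k', L')‖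
            ≤ |ω| * (M/(1+ω^2)^3 * |k - k'| + M/(1+ω^2)^3 * ((k'^2-k^2)/L)) :=
              mul_le_mul (norm_pref ω) h1 (norm_nonneg _) (abs_nonneg _)
          _ = _ := by ring
      -- compare with t2 and t3
      have habsω : |ω| ≤ 1 + ω^2 := by nlinarith [sq_nonneg (|ω|-1), sq_abs ω]
      have hsub1 : |ω| * (M/(1+ω^2)^3 * |k - k'|) ≤ t2 ω := by
        have ht2ω : t2 ω = M * |k - k'| / (1 + k ^ 2) * (1 + ω ^ 2)⁻¹ := rfl
        rw [ht2ω]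
        have e1 : |ω| * (M/(1+ω^2)^3 * |k - k'|) = (|ω| * M * |k-k'|)/(1+ω^2)^3 := by ring
        have e2 : M * |k-k'|/(1+k^2) * (1+ω^2)⁻¹ = (M * |k-k'|)/((1+k^2)*(1+ω^2)) := by
          rw [← div_eq_mul_inv, div_div]
        rw [e1, e2, div_le_div_iff₀ (by positivity) (by positivity)]
        have hk1 : 1 + k^2 ≤ 1 + ω^2 := by linarith
        have hmm : |ω| * (1+k^2) ≤ (1+ω^2)*(1+ω^2) :=
          mul_le_mul habsω hk1 (by positivity) (by positivity)
        nlinarith [mul_le_mul_of_nonneg_left hmm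
          (mul_nonneg (mul_nonneg hM.le (abs_nonneg (k-k'))) hwpos.le)]
      have hindval : (Ici |k'|).indicator (ff k) ω + (Ici |k'|).indicator (ff k) (-ω)
          = ff k ω := by
        rcases le_or_gt 0 ω with h | h
        · have hωmem : ω ∈ Ici |k'| := by
            rw [mem_Ici]; rw [abs_of_nonneg h] at hC; exact hC
          have hnmem : -ω ∉ Ici |k'| := by
            rw [mem_Ici, not_le]
            have : 0 < ω := lt_of_lt_of_le hb0 (by rw [abs_of_nonneg h] at hC; exact hC)
            linarith
          rw [Set.indicator_of_mem hωmem, Set.indicator_of_notMem hnmem, add_zero]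
        · have hωmem : -ω ∈ Ici |k'| := by
            rw [mem_Ici]; rw [abs_of_neg h] at hC; exact hC
          have hnmem : ω ∉ Ici |k'| := by rw [mem_Ici, not_le]; linarith
          rw [Set.indicator_of_mem hωmem, Set.indicator_of_notMem hnmem, zero_add,
            ff_neg_eq]
      have hsub2 : |ω| * (M/(1+ω^2)^3 * ((k'^2-k^2)/L)) ≤ t3 ω := by
        have ht3ω : t3 ω = c3 * ((Ici |k'|).indicator (ff k) ω
            + (Ici |k'|).indicator (ff k) (-ω)) := rfl
        rw [ht3ω, hindval]
        have hffω : ff k ω = |ω| / (L * (1 + (ω^2 - k^2))) := by rw [ff]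
        rw [hffω, hc3def]
        have hwk : (0:ℝ) < 1 + (ω^2 - k^2) := by nlinarith
        have e1 : |ω| * (M/(1+ω^2)^3 * ((k'^2-k^2)/L))
            = (|ω| * (M*(k'^2-k^2)))/((1+ω^2)^3 * L) := by
          rw [div_mul_div_comm, ← mul_div_assoc]
        have e2 : M*(k'^2-k^2)/(1+k^2)^2 * (|ω| / (L * (1 + (ω^2 - k^2))))
            = (M*(k'^2-k^2) * |ω|)/((1+k^2)^2 * (L * (1 + (ω^2 - k^2)))) :=
          div_mul_div_comm _ _ _ _
        rw [e1, e2, div_le_div_iff₀ (by positivity) (by positivity)]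
        have ekey : (1+k^2)^2 * (1 + (ω^2-k^2)) ≤ (1+ω^2)^3 := by
          have f1 : (1+k^2)^2 ≤ (1+ω^2)^2 := by nlinarith
          have f2 : 1 + (ω^2-k^2) ≤ 1 + ω^2 := by nlinarith [sq_nonneg k]
          nlinarith [mul_le_mul f1 f2 hwk.le (by positivity)]
        nlinarith [mul_le_mul_of_nonneg_left ekey
          (mul_nonneg (mul_nonneg (mul_nonneg (abs_nonneg ω) hM.le) (by linarith : (0:ℝ) ≤ k'^2 - k^2)) hLpos.le)]
      calc ‖(Complex.I * (|ω|:ℝ) / (2 * Real.pi) : ℂ)‖ * ‖u₀ (k, L) - u₀ (k', L')‖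
          ≤ |ω| * (M/(1+ω^2)^3 * |k - k'|) + |ω| * (M/(1+ω^2)^3 * ((k'^2-k^2)/L)) := hfull
        _ ≤ t2 ω + t3 ω := add_le_add hsub1 hsub2
        _ ≤ t1 ω + t2 ω + t3 ω := by linarith [ht1n ω]
  -- integrability of the dominating functions
  have hSsub : S ⊆ Icc (-|k'|) (-|k|) ∪ Icc |k| |k'| := by
    rintro x ⟨h1, h2⟩
    rcases le_or_gt 0 x with h | h
    · right; rw [abs_of_nonneg h] at h1 h2; exact ⟨h1, h2.le⟩
    · left; rw [abs_of_neg h] at h1 h2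
      constructor <;> linarith
  have hSvol : volume S ≤ ENNReal.ofReal (|k'|-|k|) + ENNReal.ofReal (|k'|-|k|) := by
    refine (measure_mono hSsub).trans ((measure_union_le _ _).trans ?_)
    rw [Real.volume_Icc, Real.volume_Icc]
    apply add_le_add
    · apply ENNReal.ofReal_le_ofReal; linarith
    · apply ENNReal.ofReal_le_ofReal; linarith
  have hvolS : (volume S).toReal ≤ 2*(|k'|-|k|) := by
    have h2 : volume S ≤ ENNReal.ofReal (2*(|k'|-|k|)) := by
      refine hSvol.trans (le_of_eq ?_)
      rw [← ENNReal.ofReal_add (by linarith) (by linarith)]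
      congr 1
      ring
    exact ENNReal.toReal_le_of_le_ofReal (by linarith) h2
  have hint1 : Integrable t1 := by
    rw [ht1def, integrable_indicator_iff hSm]
    apply integrableOn_const (ne_of_lt ?_)
    calc volume S ≤ ENNReal.ofReal (|k'|-|k|) + ENNReal.ofReal (|k'|-|k|) := hSvol
      _ < ⊤ := by
          exact ENNReal.add_lt_top.mpr ⟨ENNReal.ofReal_lt_top, ENNReal.ofReal_lt_top⟩
  have hint2 : Integrable t2 := by
    rw [ht2def]
    exact integrable_inv_one_add_sq.const_mul _
  have hIci : IntegrableOn (ff k) (Ici |k'|) := integrableOn_ff hlt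
  have hint3a : Integrable ((Ici |k'|).indicator (ff k)) :=
    (integrable_indicator_iff measurableSet_Ici).mpr hIci
  have hemb : MeasurableEmbedding (Neg.neg : ℝ → ℝ) :=
    (Homeomorph.neg ℝ).isClosedEmbedding.measurableEmbedding
  have hint3b : Integrable (fun ω : ℝ => (Ici |k'|).indicator (ff k) (-ω)) :=
    ((Measure.measurePreserving_neg (volume : Measure ℝ)).integrable_comp_emb hemb).mpr hint3a
  have hint3 : Integrable t3 := by
    rw [ht3def]
    exact (hint3a.add hint3b).const_mul c3
  -- integral estimates
  have i1 : ∫ ω, t1 ω ≤ 4*M* |k-k'|/(1+k^2) := by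
    rw [ht1def, integral_indicator hSm, setIntegral_const, smul_eq_mul]
    have hkb : |k'| ≤ 2*(1+k^2) := by nlinarith [sq_nonneg (|k|-1), sq_abs k]
    calc (volume S).toReal * (M* |k'|/(1+k^2)^3)
        ≤ (2*(|k'|-|k|)) * (M* |k'|/(1+k^2)^3) := by
          apply mul_le_mul_of_nonneg_right hvolS (by positivity)
      _ = (2* |k-k'|) * (M* |k'|/(1+k^2)^3) := by rw [hba]
      _ ≤ 4*M* |k-k'|/(1+k^2) := by
          have e1 : (2* |k-k'|) * (M* |k'|/(1+k^2)^3) = (2* |k-k'| *M* |k'|)/(1+k^2)^3 := by ring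
          rw [e1, div_le_div_iff₀ (by positivity) (by positivity)]
          nlinarith [mul_le_mul_of_nonneg_left hkb
            (mul_nonneg (mul_nonneg (by norm_num : (0:ℝ) ≤ 2) (abs_nonneg (k-k'))) hM.le),
            sq_nonneg k, sq_nonneg (k^2), mul_nonneg (mul_nonneg hd0.le hM.le) (sq_nonneg k),
            mul_nonneg (mul_nonneg (mul_nonneg hd0.le hM.le) (sq_nonneg k)) (sq_nonneg k)]
  have i2 : ∫ ω, t2 ω = M* |k-k'|/(1+k^2) * π := by
    simp only [ht2def]
    rw [integral_const_mul, integral_univ_inv_one_add_sq]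
  have i3 : ∫ ω, t3 ω ≤ c3 * π := by
    simp only [ht3def]
    rw [integral_const_mul, integral_add hint3a hint3b]
    have e2 : ∫ ω : ℝ, (Ici |k'|).indicator (ff k) (-ω)
        = ∫ ω : ℝ, (Ici |k'|).indicator (ff k) ω :=
      (Measure.measurePreserving_neg (volume : Measure ℝ)).integral_comp hemb _
    have e1 : ∫ ω : ℝ, (Ici |k'|).indicator (ff k) ω ≤ π/2 := by
      rw [integral_indicator measurableSet_Ici]
      exact integral_ff_le hlt
    rw [e2]
    calc c3 * ((∫ ω : ℝ, (Ici |k'|).indicator (ff k) ω)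
            + (∫ ω : ℝ, (Ici |k'|).indicator (ff k) ω))
        ≤ c3 * (π/2 + π/2) := by
          apply mul_le_mul_of_nonneg_left (by linarith) hc3n
      _ = c3 * π := by ring
  -- put everything together
  calc ∫ ω : ℝ, ‖vtil (fun p => u₀ p) k ω - vtil (fun p => u₀ p) k' ω‖
      ≤ ∫ ω : ℝ, (t1 ω + t2 ω + t3 ω) := by
        apply integral_mono_of_nonneg (Filter.Eventually.of_forall (fun ω => norm_nonneg _))
          ((hint1.add hint2).add hint3) (Filter.Eventually.of_forall key)
    _ = (∫ ω, t1 ω) + (∫ ω, t2 ω) + (∫ ω, t3 ω) := by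
        have h12 : Integrable (fun ω => t1 ω + t2 ω) volume := hint1.add hint2
        rw [integral_add h12 hint3, integral_add hint1 hint2]
    _ ≤ 20 * M * |k - k'| / (1 + k ^ 2) := by
        have hπ : π ≤ 4 := Real.pi_le_four
        have hπ0 : 0 < π := Real.pi_pos
        have hc3le : c3 ≤ 2*M* |k-k'|/(1+k^2) := by
          rw [hc3def, div_le_div_iff₀ (by positivity) (by positivity)]
          nlinarith [mul_le_mul_of_nonneg_left hdelta hM.le,
            mul_nonneg (mul_nonneg hM.le (by linarith : (0:ℝ) ≤ k'^2 - k^2)) (sq_nonneg k),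
            mul_nonneg (mul_nonneg (mul_nonneg hM.le hd0.le) (sq_nonneg k)) hkposd.le]
        have hQ0 : 0 ≤ M* |k-k'|/(1+k^2) := by positivity
        have hc3π : c3 * π ≤ (2*M* |k-k'|/(1+k^2)) * 4 :=
          mul_le_mul hc3le hπ hπ0.le (by positivity)
        have hi2 : (∫ ω, t2 ω) ≤ M* |k-k'|/(1+k^2) * 4 := by
          rw [i2]; exact mul_le_mul_of_nonneg_left hπ hQ0
        have e : (20:ℝ) * M * |k - k'| / (1 + k ^ 2)
            = 4*M* |k-k'|/(1+k^2) + M* |k-k'|/(1+k^2) * 4 + (2*M* |k-k'|/(1+k^2)) * 4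
              + 4*(M* |k-k'|/(1+k^2)) := by ring
        rw [e]
        have := i3.trans hc3π
        linarith [i1, hQ0]
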